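/- For all vectors v, w in ℝ^n with non-negative entries, (Σᵢ vᵢ⁴)^{1/2} · (Σᵢ wᵢ⁴)^{1/2} − Σᵢ vᵢ² wᵢ² ≤ (Σᵢ vᵢ²)(Σᵢ wᵢ²) − (Σᵢ vᵢ wᵢ)². -/

import Mathlib

open Finset

private lemma lagrange_id (n : ℕ) (a b : Fin n → ℝ) :
    ∑ i, ∑ j, (a i * b j - a j * b i) ^ 2
      = 2 * ((∑ i, a i ^ 2) * (∑ i, b i ^ 2) - (∑ i, a i * b i) ^ 2) := by
  have h : ∀ i j : Fin n, (a i * b j - a j * b i) ^ 2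
      = a i ^ 2 * b j ^ 2 + a j ^ 2 * b i ^ 2 - 2 * ((a i * b i) * (a j * b j)) := by
    intro i j; ring
  simp only [h, Finset.sum_sub_distrib, Finset.sum_add_distrib, ← Finset.mul_sum,
    ← Finset.sum_mul]
  ring_nf

private lemma pair_sum_le (n : ℕ) (f : Fin n → ℝ) (hf : ∀ i, 0 ≤ f i) {i j : Fin n}
    (hij : i ≠ j) : f i + f j ≤ ∑ k, f k := by
  have : f i + f j = ∑ k ∈ ({i, j} : Finset (Fin n)), f k := by
    rw [Finset.sum_pair hij]
  rw [this]
  exact Finset.sum_le_sum_of_subset_of_nonneg (Finset.subset_univ _)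
    (fun k _ _ => hf k)

theorem sqrt_fourth_power_ineq (n : ℕ) (v w : Fin n → ℝ)
    (hv : ∀ i, 0 ≤ v i) (hw : ∀ i, 0 ≤ w i) :
    Real.sqrt (∑ i, v i ^ 4) * Real.sqrt (∑ i, w i ^ 4) - ∑ i, v i ^ 2 * w i ^ 2
      ≤ (∑ i, v i ^ 2) * (∑ i, w i ^ 2) - (∑ i, v i * w i) ^ 2 := by
  set P := ∑ i, v i ^ 4 with hPdef
  set Q := ∑ i, w i ^ 4 with hQdef
  set C := ∑ i, v i ^ 2 * w i ^ 2 with hCdef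
  have hP : 0 ≤ P := Finset.sum_nonneg fun i _ => by positivity
  have hQ : 0 ≤ Q := Finset.sum_nonneg fun i _ => by positivity
  have hC : 0 ≤ C := Finset.sum_nonneg fun i _ => by positivity
  set R := Real.sqrt P * Real.sqrt Q with hRdef
  have hR : 0 ≤ R := mul_nonneg (Real.sqrt_nonneg _) (Real.sqrt_nonneg _)
  have hRsq : R ^ 2 = P * Q := by
    rw [hRdef, mul_pow, Real.sq_sqrt hP, Real.sq_sqrt hQ]
  have hCS : (∑ i, v i * w i) ^ 2 ≤ (∑ i, v i ^ 2) * (∑ i, w i ^ 2) := by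
    have := Finset.sum_mul_sq_le_sq_mul_sq Finset.univ v w
    simpa using this
  -- pointwise bound
  have key : ∀ i j : Fin n,
      (v i * w j - v j * w i) ^ 2 * (v i * w j + v j * w i) ^ 2
        ≤ (R + C) * (v i * w j - v j * w i) ^ 2 := by
    intro i j
    rcases eq_or_ne i j with rfl | hij
    · simp
    · rw [mul_comm ((v i * w j - v j * w i) ^ 2)]
      apply mul_le_mul_of_nonneg_right _ (sq_nonneg _)
      have h1 : v i ^ 2 * w j ^ 2 + v j ^ 2 * w i ^ 2 ≤ R := by
        have hvP : v i ^ 4 + v j ^ 4 ≤ P :=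
          pair_sum_le n (fun k => v k ^ 4) (fun k => by positivity) hij
        have hwQ : w i ^ 4 + w j ^ 4 ≤ Q :=
          pair_sum_le n (fun k => w k ^ 4) (fun k => by positivity) hij
        rw [hRdef, ← Real.sqrt_mul hP]
        rw [Real.le_sqrt (by positivity) (by positivity)]
        have hcs2 : (v i ^ 2 * w j ^ 2 + v j ^ 2 * w i ^ 2) ^ 2
            ≤ (v i ^ 4 + v j ^ 4) * (w i ^ 4 + w j ^ 4) := by
          nlinarith [sq_nonneg (v i ^ 2 * w i ^ 2 - v j ^ 2 * w j ^ 2)]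
        have hmul : (v i ^ 4 + v j ^ 4) * (w i ^ 4 + w j ^ 4) ≤ P * Q :=
          mul_le_mul hvP hwQ (by positivity) hP
        linarith
      have h2 : 2 * (v i * w j * (v j * w i)) ≤ C := by
        have hpC : v i ^ 2 * w i ^ 2 + v j ^ 2 * w j ^ 2 ≤ C :=
          pair_sum_le n (fun k => v k ^ 2 * w k ^ 2) (fun k => by positivity) hij
        nlinarith [sq_nonneg (v i * w i - v j * w j)]
      nlinarith
  -- sum the pointwise bound
  have hsum : ∑ i, ∑ j, (v i * w j - v j * w i) ^ 2 * (v i * w j + v j * w i) ^ 2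
      ≤ (R + C) * ∑ i, ∑ j, (v i * w j - v j * w i) ^ 2 := by
    rw [Finset.mul_sum]
    refine Finset.sum_le_sum fun i _ => ?_
    rw [Finset.mul_sum]
    exact Finset.sum_le_sum fun j _ => key i j
  have hL : ∑ i, ∑ j, (v i * w j - v j * w i) ^ 2 * (v i * w j + v j * w i) ^ 2
      = 2 * (P * Q - C ^ 2) := by
    have := lagrange_id n (fun i => v i ^ 2) (fun i => w i ^ 2)
    have hPe : (∑ i, ((fun i => v i ^ 2) i) ^ 2) = P := by
      rw [hPdef]; exact Finset.sum_congr rfl fun i _ => by ring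
    have hQe : (∑ i, ((fun i => w i ^ 2) i) ^ 2) = Q := by
      rw [hQdef]; exact Finset.sum_congr rfl fun i _ => by ring
    simp only at this hPe hQe
    rw [hPe, hQe] at this
    calc ∑ i, ∑ j, (v i * w j - v j * w i) ^ 2 * (v i * w j + v j * w i) ^ 2
        = ∑ i, ∑ j, ((fun i => v i ^ 2) i * (fun i => w i ^ 2) j
            - (fun i => v i ^ 2) j * (fun i => w i ^ 2) i) ^ 2 := by
          refine Finset.sum_congr rfl fun i _ => Finset.sum_congr rfl fun j _ => by ring
      _ = 2 * (P * Q - (∑ i, v i ^ 2 * w i ^ 2) ^ 2) := this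
      _ = 2 * (P * Q - C ^ 2) := by rw [← hCdef]
  have hR2 : ∑ i, ∑ j, (v i * w j - v j * w i) ^ 2
      = 2 * ((∑ i, v i ^ 2) * (∑ i, w i ^ 2) - (∑ i, v i * w i) ^ 2) :=
    lagrange_id n v w
  rw [hL, hR2] at hsum
  set RHS := (∑ i, v i ^ 2) * (∑ i, w i ^ 2) - (∑ i, v i * w i) ^ 2 with hRHSdef
  have hRHS : 0 ≤ RHS := by rw [hRHSdef]; linarith
  rcases eq_or_lt_of_le (add_nonneg hR hC) with h0 | h0
  · have hR0 : R = 0 := by linarith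
    have hC0 : C = 0 := by linarith
    rw [hR0, hC0]
    linarith
  · have hfac : (R - C) * (R + C) ≤ RHS * (R + C) := by
      have : R ^ 2 - C ^ 2 = (R - C) * (R + C) := by ring
      nlinarith
    have := (mul_le_mul_iff_of_pos_right h0).mp hfac
    linarith
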